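/- arXiv:2408.13048 — 3 statements merged into one kernel-verified Lean document; each statement's English description precedes it below -/
import Mathlib

section
/- Fundamental theorem of asset pricing under model uncertainty (single period): there exists no trading strategy that is an arbitrage under model uncertainty if and only if there exists a risk neutral probability measure Q, i.e. a probability measure Q on Ω with Q(ω) > 0 for every ω ∈ Ω and E_Q[ΔS*_m] = 0 for every m = 1,…,M. -/
open Finset

variable {Ω : Type*} [Fintype Ω]

/-- A probability measure on the finite sample space `Ω`. -/
def IsProb (P : Ω → ℝ) : Prop := (∀ ω, 0 ≤ P ω) ∧ ∑ ω, P ω = 1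

/-- Expectation of `X` under `P`: `E_P[X] = ∑ ω, P ω * X ω`. -/
def expect (P X : Ω → ℝ) : ℝ := ∑ ω, P ω * X ω

/-- Discounted initial value of the portfolio `(h0, h)`. -/
def V0 {M : ℕ} (S0 : Fin M → ℝ) (h0 : ℝ) (h : Fin M → ℝ) : ℝ :=
  h0 + ∑ m, h m * S0 m

/-- Discounted time-1 value of the portfolio `(h0, h)`. -/
def V1 {M : ℕ} (S1 : Fin M → Ω → ℝ) (h0 : ℝ) (h : Fin M → ℝ) (ω : Ω) : ℝ :=
  h0 + ∑ m, h m * S1 m ω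

/-- Arbitrage under model uncertainty given the family `Pfam` of actual probability
measures: zero initial value, nonnegative terminal value, and positive expected
terminal value under some `P ∈ Pfam`. -/
def IsArbitrage {M : ℕ} (S0 : Fin M → ℝ) (S1 : Fin M → Ω → ℝ)
    (Pfam : Set (Ω → ℝ)) (h0 : ℝ) (h : Fin M → ℝ) : Prop :=
  V0 S0 h0 h = 0 ∧ (∀ ω, 0 ≤ V1 S1 h0 h ω) ∧ ∃ P ∈ Pfam, 0 < expect P (V1 S1 h0 h)

/-- Stiemke-type lemma: if a linear subspace of `Ω → ℝ` meets the nonnegative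
orthant only in `0`, then there is a strictly positive probability vector
orthogonal to it. -/
lemma stiemke [Nonempty Ω] (L : Submodule ℝ (Ω → ℝ))
    (hL : ∀ g ∈ L, (∀ ω, 0 ≤ g ω) → g = 0) :
    ∃ Q : Ω → ℝ, IsProb Q ∧ (∀ ω, 0 < Q ω) ∧ ∀ g ∈ L, ∑ ω, Q ω * g ω = 0 := by
  classical
  have hdisj : Disjoint (stdSimplex ℝ Ω) (L : Set (Ω → ℝ)) := by
    rw [Set.disjoint_left]
    rintro x ⟨hx0, hx1⟩ hxL
    have : x = 0 := hL x hxL hx0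
    rw [this] at hx1
    simp at hx1
  obtain ⟨f, u, v, hfu, huv, hfL⟩ :=
    geometric_hahn_banach_compact_closed (convex_stdSimplex ℝ Ω) (isCompact_stdSimplex ℝ Ω)
      L.convex (Submodule.closed_of_finiteDimensional L) hdisj
  -- f vanishes on L
  have hf0 : ∀ g ∈ L, f g = 0 := by
    intro g hg
    by_contra hne
    have ht : ((v - 1) / f g) • g ∈ L := L.smul_mem _ hg
    have := hfL _ ht
    rw [map_smul, smul_eq_mul, div_mul_cancel₀ _ hne] at this
    linarith
  have hv0 : v < 0 := by
    have := hf0 0 L.zero_mem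
    have h0 := hfL 0 L.zero_mem
    rw [this] at h0; exact h0
  -- values on vertices are negative
  have hneg : ∀ ω : Ω, f (Pi.single ω 1) < 0 := by
    intro ω
    have := hfu _ (single_mem_stdSimplex ℝ ω)
    linarith
  set c : ℝ := ∑ ω, f (Pi.single ω 1) with hc
  have hcneg : c < 0 := by
    apply Finset.sum_neg (fun ω _ => hneg ω) univ_nonempty
  have hcne : c ≠ 0 := ne_of_lt hcneg
  refine ⟨fun ω => f (Pi.single ω 1) / c, ⟨fun ω => le_of_lt ?_, ?_⟩,
    fun ω => ?_, fun g hg => ?_⟩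
  · exact div_pos_of_neg_of_neg (hneg ω) hcneg
  · rw [← Finset.sum_div, ← hc, div_self hcne]
  · exact div_pos_of_neg_of_neg (hneg ω) hcneg
  · have hrepr : f g = ∑ ω, g ω * f (Pi.single ω 1) := by
      conv_lhs => rw [← Finset.univ_sum_single g]
      rw [map_sum]
      congr 1
      funext ω
      have : (Pi.single ω (g ω) : Ω → ℝ) = g ω • (Pi.single ω (1 : ℝ) : Ω → ℝ) := by
        funext j
        by_cases hj : j = ω <;> simp [Pi.single_apply, hj]
      rw [this, map_smul, smul_eq_mul]
    have : ∑ ω, (f (Pi.single ω 1) / c) * g ω = f g / c := by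
      rw [hrepr, Finset.sum_div]
      congr 1
      funext ω
      ring
    rw [this, hf0 g hg, zero_div]

/-- The linear map sending a position `h` in the risky assets to its gains vector. -/
def gainsMap {M : ℕ} (G : Fin M → Ω → ℝ) : (Fin M → ℝ) →ₗ[ℝ] (Ω → ℝ) where
  toFun h := fun ω => ∑ m, h m * G m ω
  map_add' a b := by funext ω; simp [add_mul, Finset.sum_add_distrib]
  map_smul' c a := by funext ω; simp [Finset.mul_sum, mul_assoc]

/-- Fundamental theorem of asset pricing under model uncertainty (single period). -/
theorem fundamental_theorem_asset_pricing_uncertainty [Nonempty Ω] {M : ℕ}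
    (S0 : Fin M → ℝ) (S1 : Fin M → Ω → ℝ)
    (Pfam : Set (Ω → ℝ)) (hPfamne : Pfam.Nonempty)
    (hPfamprob : ∀ P ∈ Pfam, IsProb P)
    (hPfampos : ∀ ω : Ω, ∃ P ∈ Pfam, 0 < P ω) :
    (¬ ∃ (h0 : ℝ) (h : Fin M → ℝ), IsArbitrage S0 S1 Pfam h0 h) ↔
      ∃ Q : Ω → ℝ, IsProb Q ∧ (∀ ω, 0 < Q ω) ∧
        ∀ m : Fin M, expect Q (fun ω => S1 m ω - S0 m) = 0 := by
  classical
  set G : Fin M → Ω → ℝ := fun m ω => S1 m ω - S0 m with hG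
  constructor
  · -- no arbitrage → risk neutral measure
    intro hNA
    set L : Submodule ℝ (Ω → ℝ) := LinearMap.range (gainsMap G) with hLdef
    have hL : ∀ g ∈ L, (∀ ω, 0 ≤ g ω) → g = 0 := by
      rintro g ⟨h, rfl⟩ hge
      by_contra hne
      have : ∃ ω, gainsMap G h ω ≠ 0 := by
        by_contra hall
        push_neg at hall
        exact hne (funext hall)
      obtain ⟨ω₁, hω₁⟩ := this
      have hpos : 0 < gainsMap G h ω₁ := lt_of_le_of_ne (hge ω₁) (Ne.symm hω₁)
      obtain ⟨P, hPmem, hPpos⟩ := hPfampos ω₁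
      obtain ⟨hPnn, _⟩ := hPfamprob P hPmem
      apply hNA
      refine ⟨-∑ m, h m * S0 m, h, ?_, ?_, P, hPmem, ?_⟩
      · simp [V0]
      · intro ω
        have : V1 S1 (-∑ m, h m * S0 m) h ω = gainsMap G h ω := by
          simp only [V1, gainsMap, hG, LinearMap.coe_mk, AddHom.coe_mk, mul_sub,
            Finset.sum_sub_distrib]
          ring
        rw [this]; exact hge ω
      · have hV1 : ∀ ω, V1 S1 (-∑ m, h m * S0 m) h ω = gainsMap G h ω := by
          intro ω
          simp only [V1, gainsMap, hG, LinearMap.coe_mk, AddHom.coe_mk, mul_sub,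
            Finset.sum_sub_distrib]
          ring
        unfold _root_.expect
        apply Finset.sum_pos' (fun ω _ => by
          rw [hV1 ω]; exact mul_nonneg (hPnn ω) (hge ω))
        exact ⟨ω₁, Finset.mem_univ ω₁, by rw [hV1 ω₁]; exact mul_pos hPpos hpos⟩
    obtain ⟨Q, hQprob, hQpos, hQorth⟩ := stiemke L hL
    refine ⟨Q, hQprob, hQpos, fun m => ?_⟩
    have hGm : G m ∈ L := by
      refine ⟨Pi.single m 1, ?_⟩
      funext ω
      simp [gainsMap, Pi.single_apply, Finset.sum_ite_eq']
    exact hQorth (G m) hGm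
  · -- risk neutral measure → no arbitrage
    rintro ⟨Q, ⟨hQnn, hQsum⟩, hQpos, hQrn⟩ ⟨h0, h, hV0, hV1, P, hPmem, hPexp⟩
    -- E_Q[V1] = V0 = 0
    have key : ∀ m, ∑ ω, Q ω * S1 m ω = S0 m := by
      intro m
      have h1 := hQrn m
      unfold _root_.expect at h1
      have h2 : ∑ ω, Q ω * ((fun ω => S1 m ω - S0 m) ω)
          = (∑ ω, Q ω * S1 m ω) - S0 m := by
        simp only [mul_sub, Finset.sum_sub_distrib, ← Finset.sum_mul, hQsum, one_mul]
      rw [h2] at h1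
      linarith
    have hEQ : _root_.expect Q (V1 S1 h0 h) = 0 := by
      unfold _root_.expect V1
      have h3 : ∑ ω, Q ω * ∑ m, h m * S1 m ω = ∑ m, h m * S0 m := by
        calc ∑ ω, Q ω * ∑ m, h m * S1 m ω = ∑ ω, ∑ m, h m * (Q ω * S1 m ω) := by
              apply Finset.sum_congr rfl; intro ω _
              rw [Finset.mul_sum]
              apply Finset.sum_congr rfl; intro m _; ring
          _ = ∑ m, ∑ ω, h m * (Q ω * S1 m ω) := Finset.sum_comm
          _ = ∑ m, h m * S0 m := by
              apply Finset.sum_congr rfl; intro m _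
              rw [← Finset.mul_sum, key m]
      simp only [mul_add, Finset.sum_add_distrib, ← Finset.sum_mul, hQsum, one_mul, h3]
      unfold V0 at hV0
      linarith
    -- but E_Q[V1] > 0, since V1 ≥ 0 everywhere and positive somewhere
    obtain ⟨hPnn, _⟩ := hPfamprob P hPmem
    have : ∃ ω, 0 < V1 S1 h0 h ω := by
      by_contra hall
      push_neg at hall
      have : expect P (V1 S1 h0 h) ≤ 0 := by
        apply Finset.sum_nonpos
        intro ω _
        have := le_antisymm (hall ω) (hV1 ω)
        simp [this]
      linarith
    obtain ⟨ω₁, hω₁⟩ := this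
    have : 0 < expect Q (V1 S1 h0 h) := by
      apply Finset.sum_pos'
      · exact fun ω _ => mul_nonneg (hQnn ω) (hV1 ω)
      · exact ⟨ω₁, Finset.mem_univ ω₁, mul_pos (hQpos ω₁) hω₁⟩
    linarith
end

section
/- Fundamental theorem of asset pricing under model uncertainty with short sales prohibitions (single period): there exists no trading strategy with h_m ≥ 0 for all m = 1,…,M that is an arbitrage under model uncertainty if and only if there exists a probability measure Q on Ω with Q(ω) > 0 for every ω ∈ Ω and E_Q[ΔS*_m] ≤ 0 for every m = 1,…,M. -/
open Finset

variable {Ω : Type*} [Fintype Ω]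

set_option linter.unusedSectionVars false

section Cone

variable {E : Type*} [NormedAddCommGroup E] [NormedSpace ℝ E] [FiniteDimensional ℝ E]
variable {ι : Type*} [Fintype ι]

/-- The linear "nonnegative combination" map. -/
noncomputable def combMap (v : ι → E) : (ι → ℝ) →ₗ[ℝ] E where
  toFun h := ∑ i, h i • v i
  map_add' x y := by simp [add_smul, Finset.sum_add_distrib]
  map_smul' c x := by simp [Finset.smul_sum, mul_smul]

@[simp] lemma combMap_apply (v : ι → E) (h : ι → ℝ) : combMap v h = ∑ i, h i • v i := rfl

/-- Conic Carathéodory: every nonnegative combination can be rewritten with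
linearly independent support. -/
lemma cone_cara (v : ι → E) (N : ℕ) :
    ∀ h : ι → ℝ, (∀ i, 0 ≤ h i) → ({i | h i ≠ 0}.ncard ≤ N) →
    ∃ h' : ι → ℝ, (∀ i, 0 ≤ h' i) ∧ (∑ i, h' i • v i = ∑ i, h i • v i) ∧
      LinearIndependent ℝ (fun i : {i // h' i ≠ 0} => v i) := by
  induction N with
  | zero =>
    intro h hnn hcard
    refine ⟨h, hnn, rfl, ?_⟩
    have he : {i | h i ≠ 0} = ∅ := ((Set.ncard_eq_zero (Set.toFinite _)).mp
      (Nat.le_zero.mp hcard))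
    haveI : IsEmpty {i // h i ≠ 0} := Set.isEmpty_coe_sort.mpr he
    exact linearIndependent_empty_type
  | succ N IH =>
    intro h hnn hcard
    by_cases hLI : LinearIndependent ℝ (fun i : {i // h i ≠ 0} => v i)
    · exact ⟨h, hnn, rfl, hLI⟩
    classical
    haveI : Fintype {i // h i ≠ 0} := Fintype.ofFinite _
    obtain ⟨g, hg0, j, hgj⟩ := Fintype.not_linearIndependent_iff.mp hLI
    have key : ∀ G : ι → ℝ, (∑ i, G i • v i = 0) → (∀ i, G i ≠ 0 → h i ≠ 0) →
        (∃ i, 0 < G i) → ∃ h' : ι → ℝ, (∀ i, 0 ≤ h' i) ∧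
          (∑ i, h' i • v i = ∑ i, h i • v i) ∧
          LinearIndependent ℝ (fun i : {i // h' i ≠ 0} => v i) := by
      rintro G hGsum hGsupp ⟨j0, hj0⟩
      set T := Finset.univ.filter (fun i => 0 < G i) with hT
      have hTne : T.Nonempty := ⟨j0, by simp [hT, hj0]⟩
      obtain ⟨i0, hi0T, hi0min⟩ := T.exists_min_image (fun i => h i / G i) hTne
      have hGi0 : 0 < G i0 := by simpa [hT] using hi0T
      set t := h i0 / G i0 with ht
      have ht0 : 0 ≤ t := div_nonneg (hnn i0) hGi0.le
      set h' : ι → ℝ := fun i => h i - t * G i with hh'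
      have hh'nn : ∀ i, 0 ≤ h' i := by
        intro i
        by_cases hGi : 0 < G i
        · have h1 := hi0min i (by simp [hT, hGi])
          have h2 : t * G i ≤ h i := by
            rw [← le_div_iff₀ hGi]; exact h1
          simp only [hh']; linarith
        · push_neg at hGi
          have h2 : t * G i ≤ 0 := mul_nonpos_of_nonneg_of_nonpos ht0 hGi
          have h3 := hnn i
          simp only [hh']; linarith
      have hsum : ∑ i, h' i • v i = ∑ i, h i • v i := by
        simp only [hh', sub_smul, Finset.sum_sub_distrib]
        have e : ∑ i, (t * G i) • v i = t • ∑ i, G i • v i := by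
          rw [Finset.smul_sum]
          exact Finset.sum_congr rfl fun i _ => (mul_smul t (G i) (v i))
        rw [e, hGsum, smul_zero, sub_zero]
      have hsubset : {i | h' i ≠ 0} ⊆ {i | h i ≠ 0} := by
        intro i hi
        simp only [Set.mem_setOf_eq, hh'] at hi ⊢
        intro h0
        apply hi
        have hGz : G i = 0 := by
          by_contra hG
          exact (hGsupp i hG) h0
        rw [h0, hGz]; ring
      have hne : h i0 ≠ 0 := hGsupp i0 hGi0.ne'
      have hi0' : h' i0 = 0 := by
        simp only [hh', ht]
        field_simp
        ring
      have hss : {i | h' i ≠ 0} ⊂ {i | h i ≠ 0} := by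
        refine ⟨hsubset, fun hrev => ?_⟩
        have : i0 ∈ {i | h' i ≠ 0} := hrev hne
        exact this hi0'
      have hcard' : {i | h' i ≠ 0}.ncard ≤ N := by
        have := Set.ncard_lt_ncard hss (Set.toFinite _)
        omega
      obtain ⟨h'', a, b, c⟩ := IH h' hh'nn hcard'
      exact ⟨h'', a, b.trans hsum, c⟩
    set G : ι → ℝ := fun i => if hi : h i ≠ 0 then g ⟨i, hi⟩ else 0 with hG
    have hGsupp : ∀ i, G i ≠ 0 → h i ≠ 0 := by
      intro i hGi
      by_contra h0
      rw [hG] at hGi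
      simp only [dif_neg (not_not_intro h0)] at hGi
      exact hGi rfl
    have hGval : ∀ i : {i // h i ≠ 0}, G ↑i = g i := by
      intro i
      rw [hG]
      simp only [dif_pos i.2]
    have hGsum : ∑ i, G i • v i = 0 := by
      have e1 : ∑ i ∈ Finset.univ.filter (fun i => h i ≠ 0), G i • v i
          = ∑ i, G i • v i := by
        refine Finset.sum_filter_of_ne ?_
        intro x _ hx
        intro h0
        apply hx
        rw [hG]
        simp only [dif_neg (not_not_intro h0), zero_smul]
      have e2 : ∑ i ∈ Finset.univ.filter (fun i => h i ≠ 0), G i • v i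
          = ∑ i : {i // h i ≠ 0}, G ↑i • v ↑i := by
        refine Finset.sum_subtype _ (fun x => ?_) _
        simp
      rw [← e1, e2]
      calc ∑ i : {i // h i ≠ 0}, G ↑i • v ↑i = ∑ i : {i // h i ≠ 0}, g i • v ↑i := by
            exact Finset.sum_congr rfl fun i _ => by rw [hGval i]
        _ = 0 := hg0
    rcases lt_or_gt_of_ne (show G ↑j ≠ 0 by rw [hGval j]; exact hgj) with hlt | hgt
    · refine key (-G) ?_ ?_ ⟨j, ?_⟩
      · simp only [Pi.neg_apply, neg_smul, Finset.sum_neg_distrib, hGsum, neg_zero]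
      · intro i hi
        exact hGsupp i (by simpa using hi)
      · simp only [Pi.neg_apply]; linarith
    · exact key G hGsum hGsupp ⟨j, hgt⟩

lemma isClosed_coneSet (v : ι → E) :
    IsClosed {x : E | ∃ h : ι → ℝ, (∀ i, 0 ≤ h i) ∧ x = ∑ i, h i • v i} := by
  classical
  have horth : ∀ (κ : Type _) [Fintype κ], IsClosed {k : κ → ℝ | ∀ i, 0 ≤ k i} := by
    intro κ _
    have : {k : κ → ℝ | ∀ i, 0 ≤ k i} = ⋂ i, (fun k : κ → ℝ => k i) ⁻¹' Set.Ici 0 := by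
      ext k; simp [Set.mem_iInter]
    rw [this]
    exact isClosed_iInter fun i => IsClosed.preimage (continuous_apply i) isClosed_Ici
  have key : {x : E | ∃ h : ι → ℝ, (∀ i, 0 ≤ h i) ∧ x = ∑ i, h i • v i}
      = ⋃ s ∈ {s : Finset ι | LinearIndependent ℝ (fun i : ↥s => v ↑i)},
          combMap (fun i : ↥s => v ↑i) '' {k | ∀ i, 0 ≤ k i} := by
    ext x
    simp only [Set.mem_setOf_eq, Set.mem_iUnion, Set.mem_image, exists_prop]
    constructor
    · rintro ⟨h, hnn, rfl⟩
      obtain ⟨h', hnn', hsum', hLI'⟩ := cone_cara v ({i | h i ≠ 0}.ncard) h hnn le_rfl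
      set s : Finset ι := Finset.univ.filter (fun i => h' i ≠ 0) with hs
      have hmem : ∀ i : ι, i ∈ s ↔ h' i ≠ 0 := fun i => by simp [hs]
      have hLIs : LinearIndependent ℝ (fun i : ↥s => v ↑i) := by
        have inj : Function.Injective
            (fun i : ↥s => (⟨i.1, (hmem i.1).mp i.2⟩ : {i // h' i ≠ 0})) := by
          intro a b hab
          simp only [Subtype.mk.injEq] at hab
          exact Subtype.ext hab
        exact hLI'.comp _ inj
      refine ⟨s, hLIs, (fun i => h' ↑i), fun i => hnn' _, ?_⟩
      rw [combMap_apply]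
      have e1 : ∑ i : ↥s, h' ↑i • v ↑i = ∑ i ∈ s, h' i • v i :=
        Finset.sum_coe_sort s (fun i => h' i • v i)
      have e2 : ∑ i ∈ s, h' i • v i = ∑ i, h' i • v i := by
        rw [hs]
        refine Finset.sum_filter_of_ne ?_
        intro x _ hx h0
        apply hx
        rw [h0, zero_smul]
      rw [e1, e2, hsum']
    · rintro ⟨s, hsLI, k, hknn, rfl⟩
      refine ⟨fun i => if hi : i ∈ s then k ⟨i, hi⟩ else 0, fun i => ?_, ?_⟩
      · dsimp only
        split
        · exact hknn _
        · exact le_rfl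
      · rw [combMap_apply]
        have e1 : ∑ i, (if hi : i ∈ s then k ⟨i, hi⟩ else 0) • v i
            = ∑ i ∈ s, (if hi : i ∈ s then k ⟨i, hi⟩ else 0) • v i :=
          (Finset.sum_subset (Finset.subset_univ s)
            (fun x _ hx => by rw [dif_neg hx, zero_smul])).symm
        have e2 : ∑ i ∈ s, (if hi : i ∈ s then k ⟨i, hi⟩ else 0) • v i
            = ∑ i : ↥s, (if hi : (i:ι) ∈ s then k ⟨i, hi⟩ else 0) • v ↑i :=
          (Finset.sum_coe_sort s _).symm
        rw [e1, e2]
        refine (Finset.sum_congr rfl fun i _ => ?_).symm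
        rw [dif_pos i.2]
  rw [key]
  refine Set.Finite.isClosed_biUnion (Set.toFinite _) ?_
  intro s hsLI
  have hker : LinearMap.ker (combMap (fun i : ↥s => v ↑i)) = ⊥ := by
    rw [LinearMap.ker_eq_bot']
    intro m hm
    rw [combMap_apply] at hm
    exact funext (Fintype.linearIndependent_iff.mp hsLI m hm)
  exact ((combMap (fun i : ↥s => v ↑i)).isClosedEmbedding_of_injective hker).isClosedMap
    _ (horth _)

end Cone

/-- Fundamental theorem of asset pricing under model uncertainty with short sales
prohibitions (single period). -/
theorem fundamental_theorem_short_sales [Nonempty Ω] {M : ℕ}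
    (S0 : Fin M → ℝ) (S1 : Fin M → Ω → ℝ)
    (Pfam : Set (Ω → ℝ)) (hPfamne : Pfam.Nonempty)
    (hPfamprob : ∀ P ∈ Pfam, IsProb P)
    (hPfampos : ∀ ω : Ω, ∃ P ∈ Pfam, 0 < P ω) :
    (¬ ∃ (h0 : ℝ) (h : Fin M → ℝ), (∀ m, 0 ≤ h m) ∧ IsArbitrage S0 S1 Pfam h0 h) ↔
      ∃ Q : Ω → ℝ, IsProb Q ∧ (∀ ω, 0 < Q ω) ∧
        ∀ m : Fin M, expect Q (fun ω => S1 m ω - S0 m) ≤ 0 := by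
  classical
  constructor
  · intro hNA
    set v : Fin M → (Ω → ℝ) := fun m ω => S1 m ω - S0 m with hv
    set C : Set (Ω → ℝ) := {x | ∃ h : Fin M → ℝ, (∀ i, 0 ≤ h i) ∧ x = ∑ i, h i • v i}
      with hC
    have hCclosed : IsClosed C := isClosed_coneSet v
    have hCconv : Convex ℝ C := by
      rintro x ⟨hx, hxnn, rfl⟩ y ⟨hy, hynn, rfl⟩ a b ha hb hab
      refine ⟨fun i => a * hx i + b * hy i, fun i => add_nonneg (mul_nonneg ha (hxnn i)) (mul_nonneg hb (hynn i)), ?_⟩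
      rw [Finset.smul_sum, Finset.smul_sum, ← Finset.sum_add_distrib]
      refine Finset.sum_congr rfl fun i _ => ?_
      rw [add_smul, mul_smul, mul_smul]
    have hsumapp : ∀ (h : Fin M → ℝ) (ω : Ω),
        (∑ i, h i • v i) ω = ∑ i, h i * (S1 i ω - S0 i) := by
      intro h ω
      rw [Finset.sum_apply]
      exact Finset.sum_congr rfl fun i _ => rfl
    have hdisj : Disjoint C (stdSimplex ℝ Ω) := by
      rw [Set.disjoint_left]
      rintro x ⟨h, hnn, rfl⟩ ⟨hxnn, hxsum⟩
      apply hNA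
      have hV1eq : ∀ ω, V1 S1 (-∑ m, h m * S0 m) h ω = (∑ i, h i • v i) ω := by
        intro ω
        rw [hsumapp, V1]
        rw [Finset.sum_congr rfl (fun i (_ : i ∈ univ) => mul_sub (h i) (S1 i ω) (S0 i)),
          Finset.sum_sub_distrib]
        ring
      refine ⟨-∑ m, h m * S0 m, h, hnn, ?_, ?_, ?_⟩
      · rw [V0]; ring
      · intro ω; rw [hV1eq]; exact hxnn ω
      · have hex : ∃ ω, 0 < (∑ i, h i • v i) ω := by
          by_contra hc
          push_neg at hc
          have hz : ∀ ω ∈ univ, (∑ i, h i • v i) ω = 0 :=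
            fun ω _ => le_antisymm (hc ω) (hxnn ω)
          rw [Finset.sum_congr rfl hz, Finset.sum_const_zero] at hxsum
          norm_num at hxsum
        obtain ⟨ω0, hω0⟩ := hex
        obtain ⟨P, hP, hPpos⟩ := hPfampos ω0
        refine ⟨P, hP, ?_⟩
        have hPnn := (hPfamprob P hP).1
        calc (0:ℝ) < P ω0 * V1 S1 (-∑ m, h m * S0 m) h ω0 := by
              rw [hV1eq]; exact mul_pos hPpos hω0
          _ ≤ expect P (V1 S1 (-∑ m, h m * S0 m) h) :=
              Finset.single_le_sum
                (fun ω _ => mul_nonneg (hPnn ω) (by rw [hV1eq]; exact hxnn ω))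
                (Finset.mem_univ ω0)
    obtain ⟨f, u, w, hfu, huw, hfw⟩ := geometric_hahn_banach_closed_compact hCconv
      hCclosed (convex_stdSimplex ℝ Ω) (isCompact_stdSimplex ℝ Ω) hdisj
    have h0C : (0 : Ω → ℝ) ∈ C := ⟨0, fun i => le_rfl, by simp⟩
    have hu0 : 0 < u := by simpa using hfu 0 h0C
    have hfC : ∀ m, f (v m) ≤ 0 := by
      intro m
      by_contra hpos
      push_neg at hpos
      have hmem : ∀ t : ℝ, 0 ≤ t → (t • v m) ∈ C := by
        intro t ht
        refine ⟨fun i => if i = m then t else 0, fun i => by dsimp only; split <;> simp [ht], ?_⟩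
        symm
        rw [Finset.sum_eq_single m (fun i _ hi => by simp only [if_neg hi, zero_smul])
          (fun hm => absurd (Finset.mem_univ m) hm)]
        simp
      have hlt : ∀ t : ℝ, 0 ≤ t → t * f (v m) < u := by
        intro t ht
        have := hfu _ (hmem t ht)
        rwa [map_smul, smul_eq_mul] at this
      have h2 := hlt ((u + 1) / f (v m)) (by positivity)
      rw [div_mul_cancel₀ _ hpos.ne'] at h2
      linarith
    set q : Ω → ℝ := fun ω => f (Pi.single ω 1) with hq
    have hqpos : ∀ ω, 0 < q ω := by
      intro ω
      have hmem : Pi.single ω (1:ℝ) ∈ stdSimplex ℝ Ω := by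
        constructor
        · intro x
          rcases eq_or_ne x ω with rfl | hne
          · simp
          · simp [Pi.single_apply, hne]
        · simp
      have := hfw _ hmem
      simp only [hq]
      linarith
    have hrep : ∀ x : Ω → ℝ, f x = ∑ ω, x ω * q ω := by
      intro x
      have hx : x = ∑ ω, x ω • (Pi.single ω (1:ℝ) : Ω → ℝ) := by
        funext j
        rw [Finset.sum_apply]
        simp [Pi.single_apply, mul_ite]
      calc f x = f (∑ ω, x ω • (Pi.single ω (1:ℝ) : Ω → ℝ)) := by rw [← hx]
        _ = ∑ ω, x ω * f (Pi.single ω 1) := by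
            rw [map_sum]
            exact Finset.sum_congr rfl fun ω _ => by rw [map_smul, smul_eq_mul]
        _ = ∑ ω, x ω * q ω := rfl
    set Z := ∑ ω, q ω with hZ
    have hZpos : 0 < Z := Finset.sum_pos (fun ω _ => hqpos ω) univ_nonempty
    refine ⟨fun ω => q ω / Z, ⟨fun ω => div_nonneg (hqpos ω).le hZpos.le, ?_⟩,
      fun ω => div_pos (hqpos ω) hZpos, ?_⟩
    · rw [← Finset.sum_div, ← hZ, div_self hZpos.ne']
    · intro m
      have he : expect (fun ω => q ω / Z) (fun ω => S1 m ω - S0 m) = f (v m) / Z := by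
        simp only [_root_.expect]
        rw [hrep (v m), Finset.sum_div]
        refine Finset.sum_congr rfl fun ω _ => ?_
        have : v m ω = S1 m ω - S0 m := rfl
        rw [this]; ring
      rw [he]
      exact div_nonpos_of_nonpos_of_nonneg (hfC m) hZpos.le
  · rintro ⟨Q, ⟨hQnn, hQsum⟩, hQpos, hQle⟩ ⟨h0, h, hhnn, hArb⟩
    obtain ⟨hV0, hV1nn, P, hP, hEP⟩ := hArb
    have hPnn := (hPfamprob P hP).1
    have hex : ∃ ω, 0 < V1 S1 h0 h ω := by
      by_contra hc
      push_neg at hc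
      have : expect P (V1 S1 h0 h) ≤ 0 :=
        Finset.sum_nonpos fun ω _ => mul_nonpos_of_nonneg_of_nonpos (hPnn ω) (hc ω)
      linarith
    obtain ⟨ω0, hω0⟩ := hex
    have hEQpos : 0 < expect Q (V1 S1 h0 h) :=
      lt_of_lt_of_le (mul_pos (hQpos ω0) hω0)
        (Finset.single_le_sum (fun ω _ => mul_nonneg (hQnn ω) (hV1nn ω))
          (Finset.mem_univ ω0))
    have hswap : expect Q (V1 S1 h0 h) = h0 + ∑ m, h m * ∑ ω, Q ω * S1 m ω := by
      simp only [_root_.expect]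
      calc ∑ ω, Q ω * V1 S1 h0 h ω
          = ∑ ω, (Q ω * h0 + ∑ m, Q ω * (h m * S1 m ω)) := by
            refine Finset.sum_congr rfl fun ω _ => ?_
            rw [V1, mul_add, Finset.mul_sum]
        _ = (∑ ω, Q ω * h0) + ∑ ω, ∑ m, Q ω * (h m * S1 m ω) := Finset.sum_add_distrib
        _ = h0 + ∑ m, h m * ∑ ω, Q ω * S1 m ω := by
            rw [← Finset.sum_mul, hQsum, one_mul, Finset.sum_comm]
            congr 1
            refine Finset.sum_congr rfl fun m _ => ?_
            rw [Finset.mul_sum]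
            exact Finset.sum_congr rfl fun ω _ => by ring
    have hΔ : ∀ m, ∑ ω, Q ω * S1 m ω
        = expect Q (fun ω => S1 m ω - S0 m) + S0 m := by
      intro m
      simp only [_root_.expect]
      have : ∑ ω, Q ω * (S1 m ω - S0 m)
          = ∑ ω, Q ω * S1 m ω - (∑ ω, Q ω) * S0 m := by
        rw [Finset.sum_mul, ← Finset.sum_sub_distrib]
        exact Finset.sum_congr rfl fun ω _ => by ring
      rw [this, hQsum]; ring
    have hfinal : expect Q (V1 S1 h0 h)
        = V0 S0 h0 h + ∑ m, h m * expect Q (fun ω => S1 m ω - S0 m) := by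
      rw [hswap]
      simp only [V0]
      rw [Finset.sum_congr rfl fun m (_ : m ∈ univ) => by rw [hΔ m, mul_add]]
      rw [Finset.sum_add_distrib]
      ring
    have hnp : ∑ m, h m * expect Q (fun ω => S1 m ω - S0 m) ≤ 0 :=
      Finset.sum_nonpos fun m _ => mul_nonpos_of_nonneg_of_nonpos (hhnn m) (hQle m)
    rw [hfinal, hV0, zero_add] at hEQpos
    linarith
end

section
/- Necessary condition for no-arbitrage under model uncertainty with short sales prohibitions (single period): if there exists no trading strategy with h_m ≥ 0 for all m = 1,…,M that is an arbitrage under model uncertainty, then there exists a weak risk neutral nonlinear expectation, i.e. a nonempty family 𝒬 of probability measures on Ω such that for every ω ∈ Ω there is some Q ∈ 𝒬 with Q(ω) > 0, and for every m = 1,…,M the infimum of the set {E_Q[ΔS*_m] : Q ∈ 𝒬} is ≤ 0. -/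
open Finset

variable {Ω : Type*} [Fintype Ω]

/-- Necessary condition for no-arbitrage under model uncertainty with short sales
prohibitions: existence of a weak risk neutral nonlinear expectation. -/
theorem no_arbitrage_implies_weak_risk_neutral [Nonempty Ω] {M : ℕ}
    (S0 : Fin M → ℝ) (S1 : Fin M → Ω → ℝ)
    (Pfam : Set (Ω → ℝ)) (hPfamne : Pfam.Nonempty)
    (hPfamprob : ∀ P ∈ Pfam, IsProb P)
    (hPfampos : ∀ ω : Ω, ∃ P ∈ Pfam, 0 < P ω)
    (hNA : ¬ ∃ (h0 : ℝ) (h : Fin M → ℝ), (∀ m, 0 ≤ h m) ∧ IsArbitrage S0 S1 Pfam h0 h) :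
    ∃ 𝒬 : Set (Ω → ℝ), 𝒬.Nonempty ∧ (∀ Q ∈ 𝒬, IsProb Q) ∧
      (∀ ω : Ω, ∃ Q ∈ 𝒬, 0 < Q ω) ∧
      ∀ m : Fin M,
        sInf {x : ℝ | ∃ Q ∈ 𝒬, x = expect Q (fun ω => S1 m ω - S0 m)} ≤ 0 := by
  classical
  set n : ℝ := (Fintype.card Ω : ℝ) with hn
  have hnpos : 0 < n := by
    rw [hn]
    exact_mod_cast Fintype.card_pos (α := Ω)
  clear_value n
  -- The family of measures: mixtures of a point mass and the uniform measure.
  set 𝒬 : Set (Ω → ℝ) :=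
    {Q | ∃ ω0 : Ω, ∃ t : ℝ, 0 < t ∧ t ≤ 1 ∧
      Q = fun ω' => (1 - t) * (if ω' = ω0 then 1 else 0) + t / n} with h𝒬
  have hmem : ∀ (ω0 : Ω) (t : ℝ), 0 < t → t ≤ 1 →
      (fun ω' => (1 - t) * (if ω' = ω0 then 1 else 0) + t / n) ∈ 𝒬 := by
    intro ω0 t ht0 ht1
    exact ⟨ω0, t, ht0, ht1, rfl⟩
  -- expectation formula
  have hexp : ∀ (ω0 : Ω) (t : ℝ) (X : Ω → ℝ),
      _root_.expect (fun ω' => (1 - t) * (if ω' = ω0 then 1 else 0) + t / n) X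
        = (1 - t) * X ω0 + (t / n) * ∑ ω, X ω := by
    intro ω0 t X
    unfold _root_.expect
    have : ∀ ω : Ω, ((1 - t) * (if ω = ω0 then 1 else 0) + t / n) * X ω
        = (1 - t) * ((if ω = ω0 then 1 else 0) * X ω) + (t / n) * X ω := by
      intro ω; ring
    rw [Finset.sum_congr rfl fun ω _ => this ω, Finset.sum_add_distrib,
      ← Finset.mul_sum, ← Finset.mul_sum]
    congr 1
    congr 1
    simp [Finset.sum_ite_eq']
  -- probability measures
  have hprob : ∀ Q ∈ 𝒬, IsProb Q := by
    rintro Q ⟨ω0, t, ht0, ht1, rfl⟩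
    constructor
    · intro ω
      have h1 : 0 ≤ (1 - t) * (if ω = ω0 then 1 else 0) := by
        apply mul_nonneg (by linarith)
        split <;> norm_num
      have h2 : 0 < t / n := div_pos ht0 hnpos
      linarith
    · rw [Finset.sum_add_distrib, ← Finset.mul_sum]
      rw [Finset.sum_ite_eq' Finset.univ ω0 (fun _ => (1:ℝ))]
      simp only [Finset.mem_univ, if_true]
      rw [Finset.sum_const, Finset.card_univ, nsmul_eq_mul]
      rw [hn]
      field_simp
      ring
  -- full support
  have hsupp : ∀ ω : Ω, ∀ Q ∈ 𝒬, 0 < Q ω := by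
    rintro ω Q ⟨ω0, t, ht0, ht1, rfl⟩
    have h1 : 0 ≤ (1 - t) * (if ω = ω0 then 1 else 0) := by
      apply mul_nonneg (by linarith)
      split <;> norm_num
    have h2 : 0 < t / n := div_pos ht0 hnpos
    simp only []
    linarith
  -- nonemptiness: the uniform measure
  obtain ⟨ω1⟩ := (inferInstance : Nonempty Ω)
  have hUmem := hmem ω1 1 one_pos le_rfl
  -- key consequence of no-arbitrage: if ΔS_m ≥ 0 everywhere, then ΔS_m ≡ 0
  have keyA : ∀ m : Fin M, (∀ ω, 0 ≤ S1 m ω - S0 m) → ∀ ω, S1 m ω - S0 m = 0 := by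
    intro m hge ω
    set h0 : ℝ := -(S0 m) with hh0
    set h : Fin M → ℝ := Pi.single m 1 with hh
    have hsum : ∀ f : Fin M → ℝ, ∑ m', h m' * f m' = f m := by
      intro f
      rw [hh]
      simp [Pi.single_apply, Finset.sum_ite_eq']
    have hV1 : ∀ ω', V1 S1 h0 h ω' = S1 m ω' - S0 m := by
      intro ω'; unfold V1; rw [hsum]; ring
    have hV0 : V0 S0 h0 h = 0 := by
      unfold V0; rw [hsum]; ring
    have hVnn : ∀ ω', 0 ≤ V1 S1 h0 h ω' := by
      intro ω'; rw [hV1]; exact hge ω'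
    have hhnn : ∀ m', 0 ≤ h m' := by
      intro m'; rw [hh, Pi.single_apply]; split <;> norm_num
    -- no P ∈ Pfam gives positive expectation
    have hnopos : ∀ P ∈ Pfam, expect P (V1 S1 h0 h) ≤ 0 := by
      intro P hP
      by_contra hc
      push_neg at hc
      exact hNA ⟨h0, h, hhnn, hV0, hVnn, P, hP, hc⟩
    obtain ⟨P, hP, hPω⟩ := hPfampos ω
    have hPprob := hPfamprob P hP
    have hterm : ∀ ω' ∈ Finset.univ, (0:ℝ) ≤ P ω' * V1 S1 h0 h ω' := by
      intro ω' _
      exact mul_nonneg (hPprob.1 ω') (hVnn ω')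
    have hsum0 : expect P (V1 S1 h0 h) = 0 :=
      le_antisymm (hnopos P hP) (Finset.sum_nonneg hterm)
    have : ∀ ω' ∈ Finset.univ, P ω' * V1 S1 h0 h ω' = 0 :=
      (Finset.sum_eq_zero_iff_of_nonneg hterm).1 hsum0
    have hzero := this ω (Finset.mem_univ ω)
    rw [hV1] at hzero
    rcases mul_eq_zero.1 hzero with h1 | h2
    · exact absurd h1 (ne_of_gt hPω)
    · exact h2
  refine ⟨𝒬, ⟨_, hUmem⟩, hprob, fun ω => ⟨_, hUmem, hsupp ω _ hUmem⟩, ?_⟩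
  intro m
  set X : Ω → ℝ := fun ω => S1 m ω - S0 m with hX
  clear_value X
  apply Real.sInf_nonpos'
  by_cases hcase : ∀ ω, 0 ≤ X ω
  · -- ΔS_m ≡ 0; the uniform measure gives expectation 0
    have hcase' : ∀ ω, 0 ≤ S1 m ω - S0 m := by
      intro ω; have := hcase ω; simpa [hX] using this
    have hz0 := keyA m hcase'
    have hz : ∀ ω, X ω = 0 := by intro ω; simp [hX, hz0 ω]
    refine ⟨_root_.expect (fun ω' => ((1 - (1:ℝ)) * if ω' = ω1 then 1 else 0) + 1 / n) X,
      ⟨_, hUmem, rfl⟩, ?_⟩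
    rw [hexp]
    have : ∑ ω, X ω = 0 := Finset.sum_eq_zero fun ω _ => hz ω
    rw [this]
    norm_num
  · push_neg at hcase
    obtain ⟨ω0, hω0⟩ := hcase
    set c : ℝ := X ω0 with hc
    clear_value c
    have hcneg : c < 0 := hω0
    set A : ℝ := (∑ ω, X ω) / n with hA
    clear_value A
    by_cases hAle : A ≤ 0
    · -- uniform measure works
      refine ⟨_root_.expect (fun ω' => ((1 - (1:ℝ)) * if ω' = ω1 then 1 else 0) + 1 / n) X,
        ⟨_, hUmem, rfl⟩, ?_⟩
      rw [hexp]
      have : (1 - 1) * X ω1 + (1 / n) * ∑ ω, X ω = A := by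
        rw [hA]; ring
      rw [this]
      exact hAle
    · push_neg at hAle
      -- mix point mass at ω0 with uniform, small uniform weight
      set t : ℝ := -c / (2 * (A - c)) with ht
      clear_value t
      have hAc : 0 < A - c := by linarith
      have ht0 : 0 < t := by
        rw [ht]; apply div_pos <;> linarith
      have ht1 : t ≤ 1 := by
        rw [ht, div_le_one (by linarith)]
        linarith
      refine ⟨_root_.expect (fun ω' => ((1 - t) * if ω' = ω0 then 1 else 0) + t / n) X,
        ⟨_, hmem ω0 t ht0 ht1, rfl⟩, ?_⟩
      rw [hexp]
      have hsumA : ∑ ω, X ω = n * A := by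
        rw [hA]; field_simp
      rw [hsumA, ← hc]
      have htn : t / n * (n * A) = t * A := by
        field_simp
        try ring
      have hval : (1 - t) * c + t / n * (n * A) = c + t * (A - c) := by
        rw [htn]; ring
      rw [hval, ht]
      have : -c / (2 * (A - c)) * (A - c) = -c / 2 := by
        field_simp
        try ring
      rw [this]
      linarith only [hcneg]
end
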